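/- Let ψ ∈ ℝ^N have all entries positive and assume the index sets are symmetric (j ∈ Θ_i if and only if i ∈ Θ_j). Define the N×N real matrix J(ψ) with entries J(ψ)_{ii} = 1 + (1/(2√ψ_i)) ∑_{j∈Θ_i} √ψ_j, J(ψ)_{ij} = √ψ_i/(2√ψ_j) if j ∈ Θ_i, and J(ψ)_{ij} = 0 if j ∉ Θ_i ∪ {i}. Then every complex eigenvalue z of J(ψ) satisfies Re(z) ≥ 1; in particular J(ψ) is nonsingular. -/

import Mathlib

open Finset

theorem stmt_5 (N : ℕ) (hN : 1 ≤ N)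
    (Θ : Fin N → Finset (Fin N)) (hirr : ∀ i, i ∉ Θ i)
    (hsym : ∀ i j, j ∈ Θ i ↔ i ∈ Θ j)
    (ψ : Fin N → ℝ) (hψpos : ∀ i, 0 < ψ i)
    (J : Matrix (Fin N) (Fin N) ℝ)
    (hJ : ∀ i j, J i j =
      if i = j then 1 + 1 / (2 * Real.sqrt (ψ i)) * ∑ k ∈ Θ i, Real.sqrt (ψ k)
      else if j ∈ Θ i then Real.sqrt (ψ i) / (2 * Real.sqrt (ψ j)) else 0) :
    (∀ z : ℂ, Module.End.HasEigenvalue (Matrix.toLin' (J.map (fun x => (x : ℂ)))) z →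
      1 ≤ z.re) ∧ J.det ≠ 0 := by
  set s : Fin N → ℝ := fun i => Real.sqrt (ψ i) with hs_def
  have hs : ∀ i, 0 < s i := fun i => Real.sqrt_pos.mpr (hψpos i)
  have hsne : ∀ i, (s i : ℂ) ≠ 0 := fun i => Complex.ofReal_ne_zero.mpr (hs i).ne'
  have key : ∀ (z : ℂ) (v : Fin N → ℂ), v ≠ 0 →
      (J.map (fun x => (x : ℂ))).mulVec v = z • v → 1 ≤ z.re := by
    intro z v hv heig
    set w : Fin N → ℂ := fun i => v i / (s i : ℂ) with hw_def
    have hvw : ∀ i, v i = (s i : ℂ) * w i := by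
      intro i
      simp only [hw_def]
      rw [mul_div_cancel₀ _ (hsne i)]
    set W : ℝ := ∑ i, Complex.normSq (w i) with hW_def
    have hWpos : 0 < W := by
      obtain ⟨i, hi⟩ := Function.ne_iff.mp hv
      have hwi : w i ≠ 0 := by
        simp only [hw_def]
        exact div_ne_zero hi (hsne i)
      exact Finset.sum_pos' (fun j _ => Complex.normSq_nonneg _)
        ⟨i, Finset.mem_univ i, Complex.normSq_pos.mpr hwi⟩
    -- expand mulVec
    have hmul : ∀ i, (J.map (fun x => (x : ℂ))).mulVec v i
        = ((1 : ℂ) + ((1 / (2 * s i) * ∑ k ∈ Θ i, s k : ℝ) : ℂ)) * v i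
          + ∑ j ∈ Θ i, ((s i / (2 * s j) : ℝ) : ℂ) * v j := by
      intro i
      have h1 : (J.map (fun x => (x : ℂ))).mulVec v i
          = ∑ j, ((J i j : ℂ)) * v j := by
        simp [Matrix.mulVec, dotProduct, Matrix.map_apply]
      rw [h1]
      rw [← Finset.sum_subset (Finset.subset_univ (insert i (Θ i)))
        (by
          intro j _ hj
          simp only [Finset.mem_insert, not_or] at hj
          have : J i j = 0 := by
            rw [hJ i j, if_neg (fun h => hj.1 h.symm), if_neg hj.2]
          simp [this])]
      rw [Finset.sum_insert (hirr i)]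
      congr 1
      · rw [hJ i i, if_pos rfl]
        push_cast
        ring
      · apply Finset.sum_congr rfl
        intro j hj
        have hij : i ≠ j := fun h => hirr i (h ▸ hj)
        rw [hJ i j, if_neg hij, if_pos hj]
    -- the key identity
    have hE : z * (W : ℂ) = (W : ℂ) + ∑ i, ∑ j ∈ Θ i,
        (((s j / (2 * s i) : ℝ) : ℂ) * (Complex.normSq (w i) : ℂ)
          + (1 / 2 : ℂ) * ((starRingEnd ℂ) (w i) * w j)) := by
      have lhs : ∑ i, (starRingEnd ℂ) (w i) * ((J.map (fun x => (x : ℂ))).mulVec v i) / (s i : ℂ)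
          = z * (W : ℂ) := by
        rw [heig]
        push_cast [hW_def]
        rw [Finset.mul_sum]
        apply Finset.sum_congr rfl
        intro i _
        simp only [Pi.smul_apply, smul_eq_mul]
        rw [hvw i, Complex.normSq_eq_conj_mul_self]
        field_simp [hsne i]
      rw [← lhs]
      rw [hW_def]
      push_cast
      rw [← Finset.sum_add_distrib]
      apply Finset.sum_congr rfl
      intro i _
      rw [hmul i]
      have e1 : ∑ j ∈ Θ i, ((s i / (2 * s j) : ℝ) : ℂ) * v j
          = (s i : ℂ) * ∑ j ∈ Θ i, (1 / 2 : ℂ) * w j := by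
        rw [Finset.mul_sum]
        apply Finset.sum_congr rfl
        intro j _
        rw [hvw j]
        push_cast
        field_simp [hsne j]
      rw [e1, hvw i]
      set Y : ℂ := ((1 : ℂ) + ((1 / (2 * s i) * ∑ k ∈ Θ i, s k : ℝ) : ℂ)) * w i
        + ∑ j ∈ Θ i, (1 / 2 : ℂ) * w j with hY
      have e2 : ((1 : ℂ) + ((1 / (2 * s i) * ∑ k ∈ Θ i, s k : ℝ) : ℂ)) * ((s i : ℂ) * w i)
          + (s i : ℂ) * ∑ j ∈ Θ i, (1 / 2 : ℂ) * w j = (s i : ℂ) * Y := by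
        rw [hY]; ring
      rw [e2, show (starRingEnd ℂ) (w i) * ((s i : ℂ) * Y) = ((starRingEnd ℂ) (w i) * Y) * (s i : ℂ)
        from by ring, mul_div_cancel_right₀ _ (hsne i), hY]
      rw [Complex.normSq_eq_conj_mul_self]
      rw [Finset.sum_add_distrib]
      have e3 : ∑ j ∈ Θ i, ((s j : ℂ) / (2 * (s i : ℂ))) * ((starRingEnd ℂ) (w i) * w i)
          = ((∑ k ∈ Θ i, (s k : ℂ)) / (2 * (s i : ℂ))) * ((starRingEnd ℂ) (w i) * w i) := by
        rw [← Finset.sum_mul, ← Finset.sum_div]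
      have e4 : ∑ j ∈ Θ i, (1 / 2 : ℂ) * ((starRingEnd ℂ) (w i) * w j)
          = (starRingEnd ℂ) (w i) * ∑ j ∈ Θ i, (1 / 2 : ℂ) * w j := by
        rw [Finset.mul_sum]
        apply Finset.sum_congr rfl
        intro j _
        ring
      push_cast at e3 ⊢
      rw [e3, e4]
      ring
    -- take real parts
    set A : ℝ := ∑ i, ∑ j ∈ Θ i,
        (s j / (2 * s i) * Complex.normSq (w i) + 1 / 2 * ((starRingEnd ℂ) (w i) * w j).re)
      with hA_def
    have hre : z.re * W = W + A := by
      have := congrArg Complex.re hE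
      simpa [Complex.mul_re, Complex.add_re, Complex.re_sum, hA_def, Finset.mul_sum,
        Complex.ofReal_re, Complex.ofReal_im, ← Complex.ofReal_div, ← Complex.ofReal_mul]
        using this
    have hA : 0 ≤ A := by
      have hswap : A = ∑ i, ∑ j ∈ Θ i,
          (s i / (2 * s j) * Complex.normSq (w j) + 1 / 2 * ((starRingEnd ℂ) (w j) * w i).re) := by
        rw [hA_def]
        exact Finset.sum_comm' (fun x y => by simpa using (hsym x y))
      have h2A : 0 ≤ A + A := by
        nth_rewrite 2 [hswap]
        rw [hA_def, ← Finset.sum_add_distrib]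
        apply Finset.sum_nonneg
        intro i _
        rw [← Finset.sum_add_distrib]
        apply Finset.sum_nonneg
        intro j _
        have hconj : ((starRingEnd ℂ) (w j) * w i).re = ((starRingEnd ℂ) (w i) * w j).re := by
          rw [show (starRingEnd ℂ) (w j) * w i = (starRingEnd ℂ) ((starRingEnd ℂ) (w i) * w j) from
            by rw [map_mul]; simp [mul_comm], Complex.conj_re]
        rw [hconj]
        set X := ‖w i‖
        set Yn := ‖w j‖
        have habs : |((starRingEnd ℂ) (w i) * w j).re| ≤ X * Yn := by
          calc |((starRingEnd ℂ) (w i) * w j).re| ≤ ‖(starRingEnd ℂ) (w i) * w j‖ :=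
                Complex.abs_re_le_norm _
            _ = X * Yn := by rw [norm_mul, Complex.norm_conj]
        have hXn : Complex.normSq (w i) = X ^ 2 := Complex.normSq_eq_norm_sq _
        have hYn : Complex.normSq (w j) = Yn ^ 2 := Complex.normSq_eq_norm_sq _
        rw [hXn, hYn]
        have hid : s j / (2 * s i) * X ^ 2 + s i / (2 * s j) * Yn ^ 2 - X * Yn
            = (s j * X - s i * Yn) ^ 2 / (2 * s i * s j) := by
          field_simp [(hs i).ne', (hs j).ne']
          ring
        have hq : 0 ≤ (s j * X - s i * Yn) ^ 2 / (2 * s i * s j) := by positivity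
        have hr : -(X * Yn) ≤ ((starRingEnd ℂ) (w i) * w j).re := neg_le_of_abs_le habs
        linarith
      linarith
    have : 1 * W ≤ z.re * W := by rw [hre]; nlinarith
    exact le_of_mul_le_mul_right this hWpos
  constructor
  · intro z hz
    obtain ⟨v, hv⟩ := hz.exists_hasEigenvector
    exact key z v hv.right (by
      have := hv.apply_eq_smul
      rwa [Matrix.toLin'_apply] at this)
  · intro h0
    have hdetC : (J.map (fun x => (x : ℂ))).det = 0 := by
      have h : (J.map (fun x => (x : ℂ))) = (algebraMap ℝ ℂ).mapMatrix J := rfl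
      rw [h, ← RingHom.map_det, h0, map_zero]
    obtain ⟨v, hv, hmv⟩ := (Matrix.exists_mulVec_eq_zero_iff).mpr hdetC
    have := key 0 v hv (by simpa using hmv)
    norm_num at this
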